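/- For every n ≥ 1 and all rationally independent real numbers x₁,…,xₙ, the concept class 𝒮 = {C_w : w ∈ ℝ}, where C_w = {x ∈ ℝ : cos(wx) ≥ 0}, shatters the set {x₁,…,xₙ}: for every subset J ⊆ {1,…,n} there exists w ∈ ℝ with cos(w·x_i) ≥ 0 for all i ∈ J and cos(w·x_i) < 0 for all i ∉ J. -/

import Mathlib

open Finset Complex

/-- `x₁, …, xₙ` are rationally independent: `1, x₁, …, xₙ` are linearly
independent over `ℚ`. -/
def RatIndep {n : ℕ} (x : Fin n → ℝ) : Prop :=
  ∀ (q₀ : ℚ) (q : Fin n → ℚ),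
    (q₀ : ℝ) + ∑ i, (q i : ℝ) * x i = 0 → q₀ = 0 ∧ ∀ i, q i = 0

lemma cos_pow_expand (k : ℕ) (v : ℝ) :
    ((Real.cos v : ℂ)) ^ (2 * k) =
      ∑ s ∈ range (2 * k + 1),
        (((2 * k).choose s : ℂ) / 4 ^ k) * Complex.exp ((2 * (s : ℂ) - 2 * k) * I * v) := by
  have h : (Real.cos v : ℂ) = (Complex.exp (v * I) + Complex.exp (-v * I)) / 2 := by
    rw [Complex.ofReal_cos]; rfl
  rw [h, div_pow, add_pow, Finset.sum_div]
  refine Finset.sum_congr rfl fun s hs => ?_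
  have hs' : s ≤ 2 * k := by simpa using Nat.lt_succ_iff.mp (Finset.mem_range.mp hs)
  rw [← Complex.exp_nat_mul, ← Complex.exp_nat_mul, ← Complex.exp_add]
  have h4 : ((2 : ℂ)) ^ (2 * k) = 4 ^ k := by
    rw [pow_mul]; norm_num
  rw [h4]
  have harg : (s : ℂ) * ((v : ℂ) * I) + ((2 * k - s : ℕ) : ℂ) * (-(v : ℂ) * I)
      = (2 * (s : ℂ) - 2 * k) * I * v := by
    have : ((2 * k - s : ℕ) : ℂ) = 2 * k - s := by
      push_cast [Nat.cast_sub hs']; ring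
    rw [this]; ring
  rw [harg]; ring

lemma exists_big (n k : ℕ) (hn : 1 ≤ n) (hk : 1 ≤ k) (x φ : Fin n → ℝ)
    (hindep : ∀ σ : Fin n → ℕ, (∀ j, σ j ≤ 2 * k) →
      (∑ j, ((σ j : ℝ) - k) * x j = 0) → σ = fun _ => k)
    (hMB : ((1 : ℝ) / 2) ^ k < (((2 * k).choose k : ℝ) / 4 ^ k) ^ n) :
    ∃ w : ℝ, ((1 : ℝ) / 2) ^ k < ∏ j, Real.cos (w * x j / 2 - φ j) ^ (2 * k) := by
  classical
  set M : ℝ := (((2 * k).choose k : ℝ) / 4 ^ k) ^ n with hM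
  set B : ℝ := ((1 : ℝ) / 2) ^ k with hB
  set P : ℝ → ℝ := fun w => ∏ j, Real.cos (w * x j / 2 - φ j) ^ (2 * k) with hP
  set coef : Fin n → ℕ → ℂ := fun j s =>
    (((2 * k).choose s : ℂ) / 4 ^ k) * Complex.exp (((2 * (k : ℝ) - 2 * s) * φ j : ℝ) * I)
    with hcoef
  set c : (Fin n → ℕ) → ℝ := fun σ => ∑ j, ((σ j : ℝ) - k) * x j with hc
  set A : (Fin n → ℕ) → ℂ := fun σ => ∏ j, coef j (σ j) with hA
  set S : Finset (Fin n → ℕ) := Fintype.piFinset fun _ => range (2 * k + 1) with hS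
  set σ₀ : Fin n → ℕ := fun _ => k with hσ₀
  -- pointwise expansion
  have hfac : ∀ (w : ℝ) (j : Fin n),
      ((Real.cos (w * x j / 2 - φ j) : ℂ)) ^ (2 * k) =
        ∑ s ∈ range (2 * k + 1), coef j s * Complex.exp ((((s : ℂ) - k) * x j) * w * I) := by
    intro w j
    rw [cos_pow_expand]
    refine Finset.sum_congr rfl fun s hs => ?_
    rw [hcoef]
    conv_rhs => rw [mul_assoc, ← Complex.exp_add]
    congr 1
    push_cast
    ring
  have hPw : ∀ w : ℝ, ((P w : ℝ) : ℂ) = ∑ σ ∈ S, A σ * Complex.exp ((c σ : ℂ) * w * I) := by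
    intro w
    rw [hP]
    rw [Complex.ofReal_prod]
    simp only [Complex.ofReal_pow]
    calc (∏ j, ((Real.cos (w * x j / 2 - φ j) : ℂ)) ^ (2 * k))
        = ∏ j, ∑ s ∈ range (2 * k + 1), coef j s *
            Complex.exp ((((s : ℂ) - k) * x j) * w * I) := by
          exact Finset.prod_congr rfl fun j _ => hfac w j
      _ = ∑ σ ∈ S, ∏ j, (coef j (σ j) *
            Complex.exp ((((σ j : ℂ) - k) * x j) * w * I)) := by
          rw [hS]; exact Finset.prod_univ_sum _ _
      _ = ∑ σ ∈ S, A σ * Complex.exp ((c σ : ℂ) * w * I) := by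
          refine Finset.sum_congr rfl fun σ _ => ?_
          rw [Finset.prod_mul_distrib, hA]
          congr 1
          rw [← Complex.exp_sum]
          congr 1
          have : ((c σ : ℝ) : ℂ) = ∑ j, ((σ j : ℂ) - k) * x j := by
            rw [hc]; push_cast; rfl
          rw [this, Finset.sum_mul, Finset.sum_mul]
  have hMB' : B < M := by rw [hM, hB]; exact hMB
  have hσ₀S : σ₀ ∈ S := by
    rw [hS, hσ₀]; rw [Fintype.mem_piFinset]; intro j; rw [mem_range]; omega
  have hcσ₀ : c σ₀ = 0 := by simp [hc, hσ₀]
  have hAσ₀ : A σ₀ = (M : ℂ) := by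
    rw [hA, hσ₀, hM]
    have : ∀ j : Fin n, coef j k = (((2 * k).choose k : ℂ) / 4 ^ k) := by
      intro j; rw [hcoef]; simp
    simp only [this]
    rw [Finset.prod_const]
    push_cast
    simp
  have hAbs : ∀ σ, ‖A σ‖ = ∏ j, (((2 * k).choose (σ j) : ℝ) / 4 ^ k) := by
    intro σ
    rw [hA, norm_prod]
    refine Finset.prod_congr rfl fun j _ => ?_
    rw [hcoef]
    simp only [norm_mul, Complex.norm_exp_ofReal_mul_I, mul_one, norm_div, norm_pow]
    simp
  have hsumAbs : ∑ σ ∈ S, ‖A σ‖ = 1 := by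
    simp only [hAbs]
    have hps := Finset.prod_univ_sum (fun _ : Fin n => range (2 * k + 1))
      (fun j s => (((2 * k).choose s : ℝ) / 4 ^ k))
    rw [hS, ← hps]
    have h1 : ∀ j : Fin n, (∑ s ∈ range (2 * k + 1), (((2 * k).choose s : ℝ) / 4 ^ k)) = 1 := by
      intro j
      rw [← Finset.sum_div]
      have : (∑ s ∈ range (2 * k + 1), ((2 * k).choose s : ℝ)) = 2 ^ (2 * k) := by
        exact_mod_cast congrArg (Nat.cast : ℕ → ℝ) (Nat.sum_range_choose (2 * k))
      rw [this]
      rw [pow_mul]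
      norm_num
    rw [h1 ⟨0, hn⟩]
    simp
  -- δ
  set S' : Finset (Fin n → ℕ) := S.erase σ₀ with hS'
  have hzS' : (fun _ => 0 : Fin n → ℕ) ∈ S' := by
    rw [hS', Finset.mem_erase]
    constructor
    · intro h
      have := congrFun h ⟨0, hn⟩
      rw [hσ₀] at this
      simp at this
      omega
    · rw [hS, Fintype.mem_piFinset]; intro j; rw [mem_range]; omega
  have hS'ne : S'.Nonempty := ⟨_, hzS'⟩
  have hcne : ∀ σ ∈ S', c σ ≠ 0 := by
    intro σ hσ h0
    have hmem := Finset.mem_erase.mp hσ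
    have hle : ∀ j, σ j ≤ 2 * k := by
      intro j
      have := (Fintype.mem_piFinset.mp (hS ▸ hmem.2)) j
      rw [mem_range] at this; omega
    exact hmem.1 (by rw [hσ₀]; exact hindep σ hle (by rw [hc] at h0; exact h0))
  set δ : ℝ := S'.inf' hS'ne fun σ => |c σ| with hδ
  have hδpos : 0 < δ := by
    rw [hδ, Finset.lt_inf'_iff]
    exact fun σ hσ => abs_pos.mpr (hcne σ hσ)
  have hδle : ∀ σ ∈ S', δ ≤ |c σ| := fun σ hσ => Finset.inf'_le _ hσ
  -- T
  set T : ℝ := 2 / δ / (M - B) + 1 with hT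
  have hMBpos : 0 < M - B := sub_pos.mpr hMB'
  have hT0 : 0 < T := by
    rw [hT]; positivity
  have hTbig : 2 / δ < 2 * T * (M - B) := by
    have hTe : 2 * T * (M - B) = 4 / δ + 2 * (M - B) := by
      rw [hT]; field_simp; ring
    have h2δ : 0 < 2 / δ := by positivity
    have h4 : (4 : ℝ) / δ = 2 / δ + 2 / δ := by ring
    rw [hTe, h4]
    linarith
  -- continuity
  have hcont : Continuous P := by
    rw [hP]
    exact continuous_finset_prod _ fun j _ => by fun_prop
  have hcontE : ∀ σ : Fin n → ℕ, Continuous fun w : ℝ => Complex.exp ((c σ : ℂ) * w * I) := by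
    intro σ; fun_prop
  -- integral bound per nonconstant σ
  have hIσ : ∀ σ ∈ S', ‖∫ w in (-T)..T, Complex.exp ((c σ : ℂ) * w * I)‖ ≤ 2 / δ := by
    intro σ hσ
    have h0 : c σ ≠ 0 := hcne σ hσ
    have hcc : ((c σ : ℂ) * I) ≠ 0 := by
      simp [Complex.ofReal_ne_zero.mpr h0, Complex.I_ne_zero]
    have heq : (∫ w in (-T)..T, Complex.exp ((c σ : ℂ) * w * I))
        = ∫ w in (-T)..T, Complex.exp (((c σ : ℂ) * I) * w) := by
      apply intervalIntegral.integral_congr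
      intro w hw
      ring_nf
    rw [heq, integral_exp_mul_complex hcc]
    have habs1 : ∀ t : ℝ, ‖Complex.exp (((c σ : ℂ) * I) * t)‖ = 1 := by
      intro t
      have : ((c σ : ℂ) * I) * t = ((c σ * t : ℝ) : ℂ) * I := by push_cast; ring
      rw [this, Complex.norm_exp_ofReal_mul_I]
    rw [norm_div]
    have hccabs : ‖(c σ : ℂ) * I‖ = |c σ| := by
      rw [norm_mul, Complex.norm_I, Complex.norm_real, Real.norm_eq_abs, mul_one]
    rw [hccabs]
    have hnum : ‖Complex.exp ((c σ : ℂ) * I * T) - Complex.exp ((c σ : ℂ) * I * (-T : ℝ))‖ ≤ 2 := by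
      calc ‖Complex.exp ((c σ : ℂ) * I * T) - Complex.exp ((c σ : ℂ) * I * (-T : ℝ))‖
          ≤ ‖Complex.exp ((c σ : ℂ) * I * T)‖ +
            ‖Complex.exp ((c σ : ℂ) * I * (-T : ℝ))‖ := by
            exact norm_sub_le _ _
        _ ≤ 2 := by rw [habs1, habs1]; norm_num
    calc ‖Complex.exp ((c σ : ℂ) * I * T) - Complex.exp ((c σ : ℂ) * I * (-T : ℝ))‖ / |c σ|
        ≤ 2 / |c σ| := by
          have : 0 < |c σ| := abs_pos.mpr h0
          exact (div_le_div_iff_of_pos_right this).mpr hnum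
      _ ≤ 2 / δ := by
          gcongr
          exact hδle σ hσ
  -- integrability
  have hInt : ∀ σ ∈ S, IntervalIntegrable (fun w : ℝ => A σ * Complex.exp ((c σ : ℂ) * w * I))
      MeasureTheory.volume (-T) T := fun σ _ => Continuous.intervalIntegrable (by fun_prop) _ _
  have h2 : ((∫ w in (-T)..T, P w : ℝ) : ℂ)
      = ∑ σ ∈ S, A σ * ∫ w in (-T)..T, Complex.exp ((c σ : ℂ) * w * I) := by
    rw [← intervalIntegral.integral_ofReal]
    rw [intervalIntegral.integral_congr
      (g := fun w : ℝ => ∑ σ ∈ S, A σ * Complex.exp ((c σ : ℂ) * w * I)) (fun w _ => hPw w)]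
    rw [intervalIntegral.integral_finset_sum hInt]
    exact Finset.sum_congr rfl fun σ _ => intervalIntegral.integral_const_mul _ _
  have hI0 : (∫ w in (-T)..T, Complex.exp ((c σ₀ : ℂ) * w * I)) = ((2 * T : ℝ) : ℂ) := by
    rw [hcσ₀]
    simp only [Complex.ofReal_zero, zero_mul, Complex.exp_zero]
    rw [intervalIntegral.integral_const]
    push_cast
    ring_nf
    simp [Complex.real_smul]
  have hR : ‖∑ σ ∈ S', A σ * ∫ w in (-T)..T, Complex.exp ((c σ : ℂ) * w * I)‖
      ≤ 2 / δ := by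
    calc ‖∑ σ ∈ S', A σ * ∫ w in (-T)..T, Complex.exp ((c σ : ℂ) * w * I)‖
        ≤ ∑ σ ∈ S', ‖A σ * ∫ w in (-T)..T, Complex.exp ((c σ : ℂ) * w * I)‖ :=
          norm_sum_le _ _
      _ ≤ ∑ σ ∈ S', ‖A σ‖ * (2 / δ) := by
          refine Finset.sum_le_sum fun σ hσ => ?_
          rw [norm_mul]
          exact mul_le_mul_of_nonneg_left (hIσ σ hσ) (norm_nonneg _)
      _ = (∑ σ ∈ S', ‖A σ‖) * (2 / δ) := (Finset.sum_mul _ _ _).symm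
      _ ≤ 1 * (2 / δ) := by
          refine mul_le_mul_of_nonneg_right ?_ (by positivity)
          calc (∑ σ ∈ S', ‖A σ‖) ≤ ∑ σ ∈ S, ‖A σ‖ := by
                refine Finset.sum_le_sum_of_subset_of_nonneg ?_
                  (fun _ _ _ => norm_nonneg _)
                rw [hS']; exact Finset.erase_subset _ _
            _ = 1 := hsumAbs
      _ = 2 / δ := one_mul _
  have hsplit : (∑ σ ∈ S, A σ * ∫ w in (-T)..T, Complex.exp ((c σ : ℂ) * w * I))
      = ((M * (2 * T) : ℝ) : ℂ)
        + ∑ σ ∈ S', A σ * ∫ w in (-T)..T, Complex.exp ((c σ : ℂ) * w * I) := by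
    rw [← Finset.add_sum_erase S _ hσ₀S, hAσ₀, hI0, ← hS']
    push_cast
    ring
  have hlow : M * (2 * T) - 2 / δ ≤ ∫ w in (-T)..T, P w := by
    have h3 := congrArg Complex.re h2
    rw [Complex.ofReal_re, hsplit] at h3
    rw [Complex.add_re, Complex.ofReal_re] at h3
    set R : ℂ := ∑ σ ∈ S', A σ * ∫ w in (-T)..T, Complex.exp ((c σ : ℂ) * w * I) with hRdef
    have h4 : |R.re| ≤ ‖R‖ := Complex.abs_re_le_norm R
    have h5 : -(2 / δ) ≤ R.re := by
      have := abs_le.mp (le_trans h4 hR)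
      exact this.1
    rw [h3]
    linarith [h5]
  -- contradiction with pointwise bound
  by_contra hcon
  push_neg at hcon
  have hup : (∫ w in (-T)..T, P w) ≤ 2 * T * B := by
    have h6 : (∫ w in (-T)..T, P w) ≤ ∫ _ in (-T)..T, B :=
      intervalIntegral.integral_mono_on (by linarith) (hcont.intervalIntegrable _ _)
        intervalIntegrable_const (fun w _ => hcon w)
    rw [intervalIntegral.integral_const, smul_eq_mul] at h6
    calc (∫ w in (-T)..T, P w) ≤ (T - -T) * B := h6
      _ = 2 * T * B := by ring
  have hcomb := hlow.trans hup
  have hexp : 2 * T * (M - B) = 2 * T * M - 2 * T * B := by ring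
  linarith [hcomb, hTbig, hexp]

lemma nat_growth (n : ℕ) (hn : 1 ≤ n) : (8 * n ^ 2) ^ n < 2 ^ (4 * n ^ 2) := by
  obtain ⟨m, rfl⟩ : ∃ m, n = m + 1 := ⟨n - 1, by omega⟩
  have h1 : m + 1 ≤ 2 ^ m := Nat.lt_two_pow_self
  have h2 : (8 * (m + 1) ^ 2) ^ (m + 1) ≤ 2 ^ (2 * (m + 1) ^ 2 + (m + 1)) := by
    calc (8 * (m + 1) ^ 2) ^ (m + 1)
        = 2 ^ (3 * (m + 1)) * ((m + 1) ^ (2 * (m + 1))) := by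
          rw [mul_pow, ← pow_mul, pow_mul 2 3, pow_mul]
          norm_num [mul_comm]
      _ ≤ 2 ^ (3 * (m + 1)) * ((2 ^ m) ^ (2 * (m + 1))) :=
          Nat.mul_le_mul_left _ (Nat.pow_le_pow_left h1 _)
      _ = 2 ^ (3 * (m + 1) + m * (2 * (m + 1))) := by rw [← pow_mul, ← pow_add]
      _ = 2 ^ (2 * (m + 1) ^ 2 + (m + 1)) := by ring_nf
  refine lt_of_le_of_lt h2 (Nat.pow_lt_pow_right (by norm_num) ?_)
  nlinarith

lemma hMB_bound (n : ℕ) (hn : 1 ≤ n) :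
    ((1 : ℝ) / 2) ^ (4 * n ^ 2) <
      (((2 * (4 * n ^ 2)).choose (4 * n ^ 2) : ℝ) / 4 ^ (4 * n ^ 2)) ^ n := by
  set k : ℕ := 4 * n ^ 2 with hk
  have hk1 : 1 ≤ k := by
    have h0 : 1 ≤ n ^ 2 := Nat.one_le_pow _ _ hn
    omega
  have hcb : (4 : ℝ) ^ k ≤ 2 * k * ((2 * k).choose k) := by
    have h := Nat.four_pow_le_two_mul_self_mul_centralBinom k hk1
    rw [Nat.centralBinom] at h
    exact_mod_cast h
  have h1 : (1 : ℝ) / (2 * k) ≤ ((2 * k).choose k : ℝ) / 4 ^ k := by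
    rw [div_le_div_iff₀ (by positivity) (by positivity)]
    nlinarith [hcb]
  have h2 : ((1 : ℝ) / (2 * k)) ^ n ≤ (((2 * k).choose k : ℝ) / 4 ^ k) ^ n :=
    pow_le_pow_left₀ (by positivity) h1 n
  refine lt_of_lt_of_le ?_ h2
  rw [div_pow, div_pow, one_pow, one_pow, div_lt_div_iff₀ (by positivity) (by positivity)]
  rw [one_mul, one_mul]
  have hng := nat_growth n hn
  have hcast : ((2 : ℝ) * k) ^ n = ((8 * n ^ 2 : ℕ) ^ n : ℕ) := by
    push_cast [hk]; ring
  rw [hcast]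
  have h2k : (2 : ℝ) ^ k = ((2 ^ (4 * n ^ 2) : ℕ) : ℕ) := by push_cast [hk]; ring
  rw [h2k]
  exact_mod_cast hng


/-- Sontag: the concept class `{ {x | cos (w x) ≥ 0} : w ∈ ℝ }`
shatters every rationally independent `n`-tuple of reals. -/
theorem stmt5 (n : ℕ) (hn : 1 ≤ n) (x : Fin n → ℝ) (hx : RatIndep x)
    (J : Set (Fin n)) :
    ∃ w : ℝ, (∀ i ∈ J, 0 ≤ Real.cos (w * x i)) ∧ ∀ i ∉ J, Real.cos (w * x i) < 0 := by
  classical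
  set k : ℕ := 4 * n ^ 2 with hk
  have hk1 : 1 ≤ k := by
    have h0 : 1 ≤ n ^ 2 := Nat.one_le_pow _ _ hn
    omega
  set φ : Fin n → ℝ := fun j => if j ∈ J then 0 else Real.pi / 2 with hφ
  have hindep : ∀ σ : Fin n → ℕ, (∀ j, σ j ≤ 2 * k) →
      (∑ j, ((σ j : ℝ) - k) * x j = 0) → σ = fun _ => k := by
    intro σ hle hsum
    have hq := hx 0 (fun j => (σ j : ℚ) - k) ?_
    · funext j
      have h2 := hq.2 j
      have h3 : (σ j : ℚ) = k := by linarith [h2]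
      exact_mod_cast h3
    · push_cast
      rw [zero_add]
      exact hsum
  obtain ⟨w, hw⟩ := exists_big n k hn hk1 x φ hindep (hMB_bound n hn)
  have hle1 : ∀ i : Fin n, Real.cos (w * x i / 2 - φ i) ^ (2 * k) ≤ 1 := by
    intro i
    calc Real.cos (w * x i / 2 - φ i) ^ (2 * k)
        = (Real.cos (w * x i / 2 - φ i) ^ 2) ^ k := by rw [← pow_mul]
      _ ≤ 1 ^ k := pow_le_pow_left₀ (sq_nonneg _) (Real.cos_sq_le_one _) k
      _ = 1 := one_pow k
  have hge0 : ∀ i : Fin n, 0 ≤ Real.cos (w * x i / 2 - φ i) ^ (2 * k) := by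
    intro i
    rw [pow_mul]
    positivity
  have hfac : ∀ j : Fin n, ((1 : ℝ) / 2) ^ k < Real.cos (w * x j / 2 - φ j) ^ (2 * k) := by
    intro j
    refine lt_of_lt_of_le hw ?_
    calc (∏ i, Real.cos (w * x i / 2 - φ i) ^ (2 * k))
        = Real.cos (w * x j / 2 - φ j) ^ (2 * k) *
            ∏ i ∈ Finset.univ.erase j, Real.cos (w * x i / 2 - φ i) ^ (2 * k) :=
          (Finset.mul_prod_erase _ _ (Finset.mem_univ j)).symm
      _ ≤ Real.cos (w * x j / 2 - φ j) ^ (2 * k) * 1 := by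
          refine mul_le_mul_of_nonneg_left ?_ (hge0 j)
          exact Finset.prod_le_one (fun i _ => hge0 i) (fun i _ => hle1 i)
      _ = Real.cos (w * x j / 2 - φ j) ^ (2 * k) := mul_one _
  have hsq : ∀ j : Fin n, 1 / 2 < Real.cos (w * x j / 2 - φ j) ^ 2 := by
    intro j
    by_contra hle
    push_neg at hle
    have hb : Real.cos (w * x j / 2 - φ j) ^ (2 * k) ≤ ((1 : ℝ) / 2) ^ k := by
      rw [pow_mul]
      exact pow_le_pow_left₀ (sq_nonneg _) hle k
    exact absurd (hfac j) (not_lt.mpr hb)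
  refine ⟨w, ?_, ?_⟩
  · intro i hi
    have h := hsq i
    have hφi : φ i = 0 := by simp [hφ, hi]
    rw [hφi, sub_zero] at h
    have hcos : Real.cos (w * x i) = 2 * Real.cos (w * x i / 2) ^ 2 - 1 := by
      have h2 := Real.cos_two_mul (w * x i / 2)
      rw [show 2 * (w * x i / 2) = w * x i by ring] at h2
      exact h2
    rw [hcos]
    linarith
  · intro i hi
    have h := hsq i
    have hφi : φ i = Real.pi / 2 := by simp [hφ, hi]
    rw [hφi] at h
    have hsin : Real.cos (w * x i / 2 - Real.pi / 2) = Real.sin (w * x i / 2) := by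
      rw [← Real.cos_neg, show -(w * x i / 2 - Real.pi / 2) = Real.pi / 2 - w * x i / 2 by ring,
        Real.cos_pi_div_two_sub]
    rw [hsin] at h
    have hcos : Real.cos (w * x i) = 1 - 2 * Real.sin (w * x i / 2) ^ 2 := by
      have h2 := Real.sin_sq_add_cos_sq (w * x i / 2)
      have h3 := Real.cos_two_mul' (w * x i / 2)
      rw [show 2 * (w * x i / 2) = w * x i by ring] at h3
      linarith
    rw [hcos]
    linarith
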